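/- (Deterministic counting core of the forecast-interval coverage bound.) Let n > r ≥ 1 be integers, τ ∈ (0,1), and f : 𝕋_{r+1,n+1} → ℝ any function. Let N = n!/(n−r−1)!. For each k ∈ {1,…,n+1}, let C_{−k} be the multiset of values { f(d_1,…,d_{r+1}) : (d_1,…,d_{r+1}) ∈ 𝕋_{r+1,n+1} with d_j ≠ k for all j } (which has exactly N elements), and let Ē_{k,τ} be the ⌈τ·N⌉-th smallest element of C_{−k}. Then ((n−r)!/(n+1)!) · #{ (d_1,…,d_{r+1}) ∈ 𝕋_{r+1,n+1} : f(d_1,…,d_{r+1}) ≤ Ē_{d_{r+1},τ} } ≥ τ·(n−r)/(n+1). (This counting inequality, applied conditionally on the unordered collection of samples via exchangeability, yields Proposition 1.) -/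

import Mathlib

/-- Tuples of `s` pairwise distinct indices from `Fin m`, i.e. injections `Fin s → Fin m`. -/
abbrev TransferUQ.Tup (s m : ℕ) := {g : Fin s → Fin m // Function.Injective g}

open Classical in
/-- The multiset `C_{−k}` of transfer errors `f(d_1,…,d_{r+1})` over tuples
`(d_1,…,d_{r+1}) ∈ 𝕋_{r+1,n+1}` avoiding the index `k` in every coordinate. -/
noncomputable def TransferUQ.Cavoid (n r : ℕ) (f : TransferUQ.Tup (r+1) (n+1) → ℝ)
    (k : Fin (n+1)) : Multiset ℝ :=
  (Finset.univ.filter (fun g : TransferUQ.Tup (r+1) (n+1) => ∀ j, g.val j ≠ k)).val.map f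

/-- `Ē_{k,τ}`: the `⌈τ·N⌉`-th smallest element of the multiset `C_{−k}`, where
`N = n!/(n−r−1)!` is the number of elements of `C_{−k}` (so, 0-based, the entry at position
`⌈τ·N⌉ − 1` of the nondecreasing sorted list of `C_{−k}`). -/
noncomputable def TransferUQ.Ebar (n r : ℕ) (τ : ℝ) (f : TransferUQ.Tup (r+1) (n+1) → ℝ)
    (k : Fin (n+1)) : ℝ :=
  (Multiset.sort (TransferUQ.Cavoid n r f k) (· ≤ ·)).getD
    (⌈τ * ((n.factorial : ℝ) / ((n - r - 1).factorial : ℝ))⌉₊ - 1) 0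

open Classical in
/-- Rank lemma: in any fintype with at least `m` elements, at least `m` elements `g`
have fewer than `m` elements strictly `f`-below them. -/
lemma TransferUQ.aux_rank {α : Type*} [Fintype α] (f : α → ℝ) (m : ℕ)
    (hm : m ≤ Fintype.card α) :
    m ≤ (Finset.univ.filter fun g : α =>
        (Finset.univ.filter fun h : α => f h < f g).card < m).card := by
  by_contra hcon
  push_neg at hcon
  set S := Finset.univ.filter fun g : α =>
        (Finset.univ.filter fun h : α => f h < f g).card < m with hS
  have hne : (Finset.univ \ S).Nonempty := by
    rw [← Finset.card_pos, Finset.card_sdiff_of_subset (Finset.subset_univ S)]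
    have hu : Finset.univ.card = Fintype.card α := Finset.card_univ
    omega
  obtain ⟨g, hg, hgmin⟩ := Finset.exists_min_image _ f hne
  have hsub : (Finset.univ.filter fun h : α => f h < f g) ⊆ S := by
    intro h hh
    rw [Finset.mem_filter] at hh
    by_contra hhS
    exact absurd (hgmin h (Finset.mem_sdiff.mpr ⟨Finset.mem_univ h, hhS⟩))
      (not_le.mpr hh.2)
  have hgS : g ∈ S := by
    rw [hS, Finset.mem_filter]
    exact ⟨Finset.mem_univ g, lt_of_le_of_lt (Finset.card_le_card hsub) hcon⟩
  exact (Finset.mem_sdiff.mp hg).2 hgS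

open Classical in
/-- Quantile lemma: if fewer than `m` elements of `C` are strictly below `y`, then `y` is at
most the `m`-th smallest element of `C`. -/
lemma TransferUQ.aux_quantile (C : Multiset ℝ) (m : ℕ) (hm1 : 1 ≤ m)
    (hmc : m ≤ Multiset.card C) (y : ℝ)
    (hlt : Multiset.card (C.filter (fun x => x < y)) < m) :
    y ≤ (Multiset.sort C (· ≤ ·)).getD (m - 1) 0 := by
  set L := Multiset.sort C (· ≤ ·) with hL
  have hlen : L.length = Multiset.card C := Multiset.length_sort _
  have hmL : m - 1 < L.length := by omega
  by_contra hcon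
  push_neg at hcon
  rw [List.getD_eq_getElem L 0 hmL] at hcon
  have htake : ∀ x ∈ L.take m, x < y := by
    intro x hx
    rw [List.mem_take_iff_getElem] at hx
    obtain ⟨i, hi, rfl⟩ := hx
    have hi2 : i < m := lt_of_lt_of_le hi (min_le_left _ _)
    have hi' : i < L.length := lt_of_lt_of_le hi (min_le_right _ _)
    have hle : L.get ⟨i, hi'⟩ ≤ L.get ⟨m - 1, hmL⟩ :=
      List.Pairwise.rel_get_of_le (Multiset.pairwise_sort C _) (by simp; omega)
    simp only [List.get_eq_getElem] at hle
    exact lt_of_le_of_lt hle hcon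
  have hsubm : ((L.take m : List ℝ) : Multiset ℝ) ≤ C := by
    have := Multiset.sort_eq C (· ≤ ·)
    rw [← this]
    exact Multiset.coe_le.mpr (List.take_sublist m L).subperm
  have hfin : m ≤ Multiset.card (C.filter (fun x => x < y)) := by
    have h1 : Multiset.card ((L.take m : List ℝ) : Multiset ℝ) = m := by
      simp [List.length_take]; omega
    have h2 : ((L.take m : List ℝ) : Multiset ℝ).filter (fun x => x < y)
        = ((L.take m : List ℝ) : Multiset ℝ) := Multiset.filter_eq_self.mpr htake
    calc m = Multiset.card (((L.take m : List ℝ) : Multiset ℝ).filter (fun x => x < y)) := by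
              rw [h2, h1]
      _ ≤ _ := Multiset.card_le_card (Multiset.filter_le_filter _ hsubm)
  omega

open Classical in
/-- The number of `(r+1)`-tuples avoiding a fixed index `k`. -/
lemma TransferUQ.aux_card (n r : ℕ) (k : Fin (n+1)) :
    (Finset.univ.filter (fun g : TransferUQ.Tup (r+1) (n+1) => ∀ j, g.val j ≠ k)).card
      = n.descFactorial (r+1) := by
  rw [← Fintype.card_subtype]
  have e : {g : TransferUQ.Tup (r+1) (n+1) // ∀ j, g.val j ≠ k}
      ≃ (Fin (r+1) ↪ {x : Fin (n+1) // x ≠ k}) :=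
    { toFun := fun g => ⟨fun j => ⟨g.1.1 j, g.2 j⟩,
        fun a b hab => g.1.2 (congrArg Subtype.val hab)⟩
      invFun := fun e => ⟨⟨fun j => (e j).1,
        fun a b hab => e.injective (Subtype.ext hab)⟩, fun j => (e j).2⟩
      left_inv := fun g => rfl
      right_inv := fun e => rfl }
  rw [Fintype.card_congr e, Fintype.card_embedding_eq, Fintype.card_fin]
  congr 1
  have : Fintype.card {x : Fin (n+1) // x ≠ k} = Fintype.card (Fin (n+1)) - 1 := by
    rw [Fintype.card_subtype_compl, Fintype.card_subtype_eq]
  rw [this, Fintype.card_fin]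
  omega

open Classical in
/-- **Deterministic counting core of the forecast-interval coverage bound (Proposition 1).**
For any `f : 𝕋_{r+1,n+1} → ℝ` and `τ ∈ (0,1)`,
`((n−r)!/(n+1)!) · #{(d_1,…,d_{r+1}) ∈ 𝕋_{r+1,n+1} : f(d_1,…,d_{r+1}) ≤ Ē_{d_{r+1},τ}}
  ≥ τ(n−r)/(n+1)`. -/
theorem counting_core_coverage
    (n r : ℕ) (hr : 1 ≤ r) (hrn : r < n) (τ : ℝ) (hτ : τ ∈ Set.Ioo (0:ℝ) 1)
    (f : TransferUQ.Tup (r+1) (n+1) → ℝ) :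
    τ * ((n : ℝ) - r) / (n + 1) ≤
      ((n - r).factorial : ℝ) / ((n + 1).factorial : ℝ) *
        (Finset.univ.filter (fun g : TransferUQ.Tup (r+1) (n+1) =>
          f g ≤ TransferUQ.Ebar n r τ f (g.val (Fin.last r)))).card := by
  obtain ⟨hτ0, hτ1⟩ := hτ
  have hfact_pos : (0:ℝ) < ((n - r - 1).factorial : ℝ) := by
    exact_mod_cast Nat.factorial_pos _
  have hnfact_pos : (0:ℝ) < (n.factorial : ℝ) := by
    exact_mod_cast Nat.factorial_pos _
  set Nreal : ℝ := (n.factorial : ℝ) / ((n - r - 1).factorial : ℝ) with hNreal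
  set m : ℕ := ⌈τ * Nreal⌉₊ with hm
  have hNpos : 0 < Nreal := div_pos hnfact_pos hfact_pos
  have hNdesc : Nreal = (n.descFactorial (r+1) : ℝ) := by
    have h := Nat.factorial_mul_descFactorial (show r+1 ≤ n by omega)
    have h2 : n - (r+1) = n - r - 1 := by omega
    rw [h2] at h
    rw [hNreal, div_eq_iff (ne_of_gt hfact_pos), mul_comm]
    exact_mod_cast h.symm
  have hm1 : 1 ≤ m := Nat.ceil_pos.mpr (mul_pos hτ0 hNpos)
  have hm_le_desc : m ≤ n.descFactorial (r+1) := by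
    rw [hm]
    apply Nat.ceil_le.mpr
    rw [← hNdesc]
    nlinarith
  have hcard : ∀ k, Multiset.card (TransferUQ.Cavoid n r f k) = n.descFactorial (r+1) := by
    intro k
    rw [TransferUQ.Cavoid, Multiset.card_map]
    exact TransferUQ.aux_card n r k
  set B := Finset.univ.filter (fun g : TransferUQ.Tup (r+1) (n+1) =>
          f g ≤ TransferUQ.Ebar n r τ f (g.val (Fin.last r))) with hB
  have hmain : m ≤ B.card := by
    have hT : m ≤ Fintype.card (TransferUQ.Tup (r+1) (n+1)) := by
      refine le_trans hm_le_desc ?_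
      rw [← TransferUQ.aux_card n r (0 : Fin (n+1)), ← Finset.card_univ]
      exact Finset.card_filter_le _ _
    refine le_trans (TransferUQ.aux_rank f m hT) (Finset.card_le_card ?_)
    intro g hg
    rw [Finset.mem_filter] at hg
    rw [hB, Finset.mem_filter]
    refine ⟨Finset.mem_univ g, ?_⟩
    set k := g.1 (Fin.last r) with hk
    -- count of tuples avoiding k with value < f g is < m
    have hcnt : Multiset.card ((TransferUQ.Cavoid n r f k).filter (fun x => x < f g)) < m := by
      rw [TransferUQ.Cavoid, Multiset.filter_map, Multiset.card_map]
      refine lt_of_le_of_lt ?_ hg.2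
      have hsub : Multiset.filter ((fun x => x < f g) ∘ f)
            (Finset.univ.filter (fun g' : TransferUQ.Tup (r+1) (n+1) => ∀ j, g'.val j ≠ k)).val
          ≤ Multiset.filter ((fun x => x < f g) ∘ f) (Finset.univ : Finset (TransferUQ.Tup (r+1) (n+1))).val :=
        Multiset.filter_le_filter _ (Finset.val_le_iff.mpr (Finset.filter_subset _ _))
      refine le_trans (Multiset.card_le_card hsub) ?_
      apply le_of_eq
      rfl
    have hq := TransferUQ.aux_quantile (TransferUQ.Cavoid n r f k) m hm1
      (by rw [hcard k]; exact hm_le_desc) (f g) hcnt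
    exact hq
  -- final arithmetic
  have hBm : (m : ℝ) ≤ (B.card : ℝ) := by exact_mod_cast hmain
  have hτN : τ * Nreal ≤ (B.card : ℝ) := le_trans (Nat.le_ceil _) hBm
  have hcast1 : ((n - r : ℕ) : ℝ) = (n : ℝ) - r := by
    rw [Nat.cast_sub (le_of_lt hrn)]
  have hfac1 : ((n - r).factorial : ℝ) = ((n : ℝ) - r) * ((n - r - 1).factorial : ℝ) := by
    have h1 : n - r = (n - r - 1) + 1 := by omega
    rw [h1, Nat.factorial_succ]
    push_cast
    rw [show ((n - r - 1 : ℕ) : ℝ) = (n : ℝ) - r - 1 by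
      rw [Nat.cast_sub (by omega), Nat.cast_sub (le_of_lt hrn)]; push_cast; ring]
    ring
  have hfac2 : (((n + 1)).factorial : ℝ) = ((n : ℝ) + 1) * (n.factorial : ℝ) := by
    rw [Nat.factorial_succ]; push_cast; ring
  have hfacnr_pos : (0:ℝ) < ((n - r).factorial : ℝ) := by exact_mod_cast Nat.factorial_pos _
  have hfacn1_pos : (0:ℝ) < (((n + 1)).factorial : ℝ) := by exact_mod_cast Nat.factorial_pos _
  have hid : τ * ((n : ℝ) - r) / (n + 1)
      = ((n - r).factorial : ℝ) / (((n + 1)).factorial : ℝ) * (τ * Nreal) := by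
    rw [hNreal, hfac1, hfac2]
    field_simp
  rw [hid]
  apply mul_le_mul_of_nonneg_left hτN
  positivity
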